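/- Quantitative Buckingham theorem, full-rank case: Let A be a real m×n matrix with rank(A) = n and columns α₁ᵀ,…,αₙᵀ, let β ∈ ℝ^m, ε ≥ 0, and F ∈ S(A,β,ε). Let y ∈ ℝⁿ and δ ≥ 0 with ‖Ayᵀ − βᵀ‖_∞ ≤ δ. Put C := F(1,…,1), D := (Aᵀ)† (Moore–Penrose pseudoinverse), and fix K > 1. If v ∈ (ℝ_{>0})ⁿ satisfies K⁻¹ ≤ v_i ≤ K for all i, then |F(v) − C·v^y| ≤ |F(v)|·((1+ε)·K^{mδ‖D‖} − 1). -/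

import Mathlib

open Matrix

/-- `v^y := ∏ i, v i ^ y i` (real powers). -/
noncomputable def ppow {ι : Type*} [Fintype ι] (v y : ι → ℝ) : ℝ := ∏ i, v i ^ y i

/-- The scaled vector `(v₁c^{α₁}, …, vₙc^{αₙ})`, where `αⱼᵀ` are the columns of `A`
and `c^α := ∏ i, c i ^ α i`. -/
noncomputable def scale {m n : ℕ} (A : Matrix (Fin m) (Fin n) ℝ) (c : Fin m → ℝ)
    (v : Fin n → ℝ) : Fin n → ℝ := fun j => v j * ppow c (fun i => A i j)

/-- `F ∈ S(A,β,ε)`: `|F(v₁c^{α₁},…,vₙc^{αₙ}) − F(v)c^β| ≤ ε|F(v)|c^β` for all positive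
`v ∈ ℝⁿ`, `c ∈ ℝ^m`. `S(A,β) := S(A,β,0)`. -/
def memS {m n : ℕ} (A : Matrix (Fin m) (Fin n) ℝ) (β : Fin m → ℝ) (ε : ℝ)
    (F : (Fin n → ℝ) → ℝ) : Prop :=
  ∀ v : Fin n → ℝ, (∀ j, 0 < v j) → ∀ c : Fin m → ℝ, (∀ i, 0 < c i) →
    |F (scale A c v) - F v * ppow c β| ≤ ε * |F v| * ppow c β

lemma buck_aux (e x u g : ℝ) (he : 0 ≤ e) (hx : 0 < x) (hug : u * g = 1)
    (hux : u ≤ x) (hxg : x ≤ g) (hg : 0 < g) :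
    |1 - x| + e * x ≤ (1 + e) * g - 1 := by
  rcases abs_cases (1 - x) with ⟨h, _⟩ | ⟨h, _⟩ <;> rw [h] <;>
    nlinarith [sq_nonneg (g - 1), mul_nonneg he (sub_nonneg.mpr hxg)]

lemma ppow_exp {ι : Type*} [Fintype ι] (w y : ι → ℝ) :
    ppow (fun i => Real.exp (w i)) y = Real.exp (∑ i, w i * y i) := by
  rw [ppow, Real.exp_sum]
  exact Finset.prod_congr rfl fun i _ => (Real.exp_mul _ _).symm

/-- Quantitative Buckingham theorem, full column-rank case. `D` is the Moore–Penrose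
pseudoinverse of `Aᵀ` (characterized by the four Penrose equations) and
`‖D‖ = ⨆ i, ∑ j, |D i j|` is the operator norm induced by the max-norms. -/
theorem quantitative_buckingham_full_rank (m n : ℕ) (A : Matrix (Fin m) (Fin n) ℝ)
    (hrank : A.rank = n) (β : Fin m → ℝ) (ε : ℝ) (hε : 0 ≤ ε)
    (F : (Fin n → ℝ) → ℝ) (hF : memS A β ε F)
    (y : Fin n → ℝ) (δ : ℝ) (hδ : 0 ≤ δ) (hy : ∀ i, |A.mulVec y i - β i| ≤ δ)
    (D : Matrix (Fin m) (Fin n) ℝ)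
    (hD1 : Aᵀ * D * Aᵀ = Aᵀ) (hD2 : D * Aᵀ * D = D)
    (hD3 : (Aᵀ * D)ᵀ = Aᵀ * D) (hD4 : (D * Aᵀ)ᵀ = D * Aᵀ)
    (K : ℝ) (hK : 1 < K)
    (v : Fin n → ℝ) (hv : ∀ i, K⁻¹ ≤ v i ∧ v i ≤ K) :
    |F v - F (fun _ => 1) * ppow v y| ≤
      |F v| * ((1 + ε) * K ^ ((m : ℝ) * δ * (⨆ i, ∑ j, |D i j|)) - 1) := by
  have hK0 : (0:ℝ) < K := lt_trans one_pos hK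
  have hlogK : 0 < Real.log K := Real.log_pos hK
  have hv0 : ∀ j, 0 < v j := fun j => lt_of_lt_of_le (inv_pos.mpr hK0) (hv j).1
  -- `AᵀD = 1` from full rank and the first Penrose equation
  have hinj : Function.Injective A.mulVecLin := by
    rw [← LinearMap.ker_eq_bot]
    have h2 := LinearMap.finrank_range_add_finrank_ker A.mulVecLin
    rw [Matrix.rank] at hrank
    have h3 : Module.finrank ℝ (Fin n → ℝ) = n := Module.finrank_fin_fun ℝ
    have h0 : Module.finrank ℝ (LinearMap.ker A.mulVecLin) = 0 := by omega
    exact Submodule.finrank_eq_zero.mp h0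
  have hA : A * (Dᵀ * A) = A := by
    have := congrArg Matrix.transpose hD1
    simpa [Matrix.transpose_mul, Matrix.mul_assoc] using this
  have hDA : Dᵀ * A = 1 := by
    apply Matrix.toLin'.injective
    rw [Matrix.toLin'_one]
    refine LinearMap.ext fun x => ?_
    have hx : A.mulVecLin ((Dᵀ * A) *ᵥ x) = A.mulVecLin x := by
      simp only [Matrix.mulVecLin_apply, Matrix.mulVec_mulVec, hA]
    have := hinj hx
    simp [Matrix.toLin'_apply, this]
  have hAD : Aᵀ * D = 1 := by
    calc Aᵀ * D = (Dᵀ * A)ᵀ := by simp [Matrix.transpose_mul]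
      _ = 1 := by rw [hDA]; simp
  -- the scaling vector
  set N : ℝ := ⨆ i, ∑ j, |D i j| with hNdef
  set L : Fin n → ℝ := fun j => Real.log (v j) with hLdef
  set w : Fin m → ℝ := D *ᵥ L with hwdef
  have hAw : Aᵀ *ᵥ w = L := by
    rw [hwdef, Matrix.mulVec_mulVec, hAD, Matrix.one_mulVec]
  set c : Fin m → ℝ := fun i => Real.exp (-w i) with hcdef
  have hc0 : ∀ i, 0 < c i := fun i => Real.exp_pos _
  have hAwj : ∀ j, ∑ i, A i j * w i = L j := by
    intro j
    have h := congrFun hAw j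
    simpa [Matrix.mulVec, dotProduct, Matrix.transpose_apply] using h
  have hscale : scale A c v = fun _ => 1 := by
    funext j
    have h1 : ppow c (fun i => A i j) = Real.exp (∑ i, -w i * A i j) :=
      ppow_exp (fun i => -w i) (fun i => A i j)
    have h2 : ∑ i, -w i * A i j = -L j := by
      rw [← hAwj j, ← Finset.sum_neg_distrib]
      exact Finset.sum_congr rfl fun i _ => by ring
    show v j * ppow c (fun i => A i j) = 1
    rw [h1, h2, hLdef, Real.exp_neg, Real.exp_log (hv0 j)]
    exact mul_inv_cancel₀ (hv0 j).ne'
  -- computing `c^β` and `v^y`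
  have hP : ppow c β = Real.exp (-(∑ i, β i * w i)) := by
    have h1 : ppow c β = Real.exp (∑ i, -w i * β i) := ppow_exp (fun i => -w i) β
    rw [h1, ← Finset.sum_neg_distrib]
    congr 1
    exact Finset.sum_congr rfl fun i _ => by ring
  have hQ : ppow v y = Real.exp (∑ i, A.mulVec y i * w i) := by
    have h1 : ppow v y = Real.exp (∑ j, L j * y j) := by
      rw [ppow, Real.exp_sum]
      refine Finset.prod_congr rfl fun j _ => ?_
      rw [Real.rpow_def_of_pos (hv0 j)]
    rw [h1]
    congr 1
    calc ∑ j, L j * y j = ∑ j, ∑ i, A i j * w i * y j := by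
          refine Finset.sum_congr rfl fun j _ => ?_
          rw [← hAwj j, Finset.sum_mul]
      _ = ∑ i, ∑ j, A i j * w i * y j := Finset.sum_comm
      _ = ∑ i, A.mulVec y i * w i := by
          refine Finset.sum_congr rfl fun i _ => ?_
          simp only [Matrix.mulVec, dotProduct, Finset.sum_mul]
          exact Finset.sum_congr rfl fun j _ => by ring
  set t : ℝ := ∑ i, (A.mulVec y i - β i) * w i with htdef
  have hPQ : ppow v y * ppow c β = Real.exp t := by
    rw [hQ, hP, ← Real.exp_add, htdef]
    congr 1
    rw [← sub_eq_add_neg, ← Finset.sum_sub_distrib]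
    exact Finset.sum_congr rfl fun i _ => by ring
  -- bounding |t|
  have hN0 : 0 ≤ N := by
    rcases isEmpty_or_nonempty (Fin m) with h | h
    · simp [hNdef]
    · obtain ⟨i⟩ := h
      rw [hNdef]
      exact le_trans (Finset.sum_nonneg fun j _ => abs_nonneg _)
        (le_ciSup (f := fun i => ∑ j, |D i j|) (Set.Finite.bddAbove (Set.finite_range _)) i)
  have hlogv : ∀ j, |L j| ≤ Real.log K := by
    intro j
    rw [abs_le]
    constructor
    · rw [← Real.log_inv]
      exact Real.log_le_log (inv_pos.mpr hK0) (hv j).1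
    · exact Real.log_le_log (hv0 j) (hv j).2
  have hNw : ∀ i, |w i| ≤ N * Real.log K := by
    intro i
    have h1 : |w i| ≤ (∑ j, |D i j|) * Real.log K := by
      rw [hwdef]
      simp only [Matrix.mulVec, dotProduct]
      calc |∑ j, D i j * L j| ≤ ∑ j, |D i j * L j| := Finset.abs_sum_le_sum_abs _ _
        _ ≤ ∑ j, |D i j| * Real.log K := Finset.sum_le_sum fun j _ => by
            rw [abs_mul]
            exact mul_le_mul_of_nonneg_left (hlogv j) (abs_nonneg _)
        _ = (∑ j, |D i j|) * Real.log K := (Finset.sum_mul _ _ _).symm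
    refine h1.trans (mul_le_mul_of_nonneg_right ?_ hlogK.le)
    rw [hNdef]
    exact le_ciSup (f := fun i => ∑ j, |D i j|) (Set.Finite.bddAbove (Set.finite_range _)) i
  have ht : |t| ≤ ((m:ℝ) * δ * N) * Real.log K := by
    calc |t| ≤ ∑ i, |(A.mulVec y i - β i) * w i| := Finset.abs_sum_le_sum_abs _ _
      _ ≤ ∑ _i : Fin m, δ * (N * Real.log K) := by
          refine Finset.sum_le_sum fun i _ => ?_
          rw [abs_mul]
          exact mul_le_mul (hy i) (hNw i) (abs_nonneg _) hδ
      _ = (m:ℝ) * (δ * (N * Real.log K)) := by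
          rw [Finset.sum_const, Finset.card_univ, Fintype.card_fin, nsmul_eq_mul]
      _ = ((m:ℝ) * δ * N) * Real.log K := by ring
  set s : ℝ := (m:ℝ) * δ * N with hsdef
  have hKs : K ^ s = Real.exp (s * Real.log K) := by
    rw [Real.rpow_def_of_pos hK0, mul_comm]
  have hKs0 : (0:ℝ) < K ^ s := Real.rpow_pos_of_pos hK0 s
  set e : ℝ := Real.exp t with hedef
  have he0 : 0 < e := Real.exp_pos t
  have heub : e ≤ K ^ s := by
    rw [hKs, hedef]
    exact Real.exp_le_exp.mpr (le_trans (le_abs_self t) ht)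
  have helb : Real.exp (-(s * Real.log K)) ≤ e := by
    rw [hedef]
    exact Real.exp_le_exp.mpr (neg_le_of_abs_le ht)
  have hinvK : Real.exp (-(s * Real.log K)) * K ^ s = 1 := by
    rw [hKs, ← Real.exp_add]
    simp
  -- the membership inequality
  have hmem := hF v hv0 c hc0
  rw [hscale] at hmem
  have hP0 : 0 < ppow c β := by rw [hP]; exact Real.exp_pos _
  have hPQe : ppow c β * ppow v y = e := by rw [mul_comm, hPQ]
  have hQ0 : 0 < ppow v y := by rw [hQ]; exact Real.exp_pos _
  have key : F v - F (fun _ => 1) * ppow v y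
      = F v * (1 - e) + (F v * ppow c β - F (fun _ => 1)) * ppow v y := by
    rw [← hPQe]; ring
  have final : |1 - e| + ε * e ≤ (1 + ε) * K ^ s - 1 :=
    buck_aux ε e (Real.exp (-(s * Real.log K))) (K ^ s) hε he0 hinvK helb heub hKs0
  calc |F v - F (fun _ => 1) * ppow v y|
      = |F v * (1 - e) + (F v * ppow c β - F (fun _ => 1)) * ppow v y| := by rw [key]
    _ ≤ |F v * (1 - e)| + |(F v * ppow c β - F (fun _ => 1)) * ppow v y| := abs_add_le _ _
    _ = |F v| * |1 - e| + |F (fun _ => 1) - F v * ppow c β| * ppow v y := by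
        rw [abs_mul, abs_mul, abs_sub_comm (F v * ppow c β), abs_of_pos hQ0]
    _ ≤ |F v| * |1 - e| + (ε * |F v| * ppow c β) * ppow v y := by
        exact add_le_add_right (mul_le_mul_of_nonneg_right hmem hQ0.le) _
    _ = |F v| * (|1 - e| + ε * e) := by
        rw [mul_assoc, hPQe]; ring
    _ ≤ |F v| * ((1 + ε) * K ^ s - 1) := mul_le_mul_of_nonneg_left final (abs_nonneg _)
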